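/- Let A = [a_{ij}] ∈ SO_3(ℝ). If a_{23} + a_{32}, a_{13} + a_{31}, and a_{12} + a_{21} are all nonzero, then the vector V = (1/(a_{23}+a_{32}), 1/(a_{13}+a_{31}), 1/(a_{12}+a_{21})) satisfies AV = V. -/

import Mathlib

open Matrix

lemma sum_sq_eq_zero_aux {x y : ℝ} (hxy : x ^ 2 + y ^ 2 = 0) : x = 0 ∧ y = 0 := by
  constructor <;> nlinarith [sq_nonneg x, sq_nonneg y]

set_option maxHeartbeats 1600000 in
theorem SO3_reciprocal_eigenvector (A : Matrix (Fin 3) (Fin 3) ℝ)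
    (horth : Aᵀ * A = 1) (hdet : A.det = 1)
    (h1 : A 1 2 + A 2 1 ≠ 0) (h2 : A 0 2 + A 2 0 ≠ 0) (h3 : A 0 1 + A 1 0 ≠ 0) :
    A.mulVec ![(A 1 2 + A 2 1)⁻¹, (A 0 2 + A 2 0)⁻¹, (A 0 1 + A 1 0)⁻¹] =
      ![(A 1 2 + A 2 1)⁻¹, (A 0 2 + A 2 0)⁻¹, (A 0 1 + A 1 0)⁻¹] := by
  have hAAt : A * Aᵀ = 1 := mul_eq_one_comm.mp horth
  have hadj : adjugate A = Aᵀ := by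
    have h1' : A * adjugate A = 1 := by rw [mul_adjugate, hdet, one_smul]
    exact Matrix.right_inv_eq_right_inv h1' hAAt
  obtain ⟨a, b, c, d, e, f, g, h, p, ha', hb', hc', hd', he', hf', hg', hh', hp'⟩ :
      ∃ a b c d e f g h p : ℝ, A 0 0 = a ∧ A 0 1 = b ∧ A 0 2 = c ∧ A 1 0 = d ∧ A 1 1 = e ∧
        A 1 2 = f ∧ A 2 0 = g ∧ A 2 1 = h ∧ A 2 2 = p :=
    ⟨_, _, _, _, _, _, _, _, _, rfl, rfl, rfl, rfl, rfl, rfl, rfl, rfl, rfl⟩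
  -- adjugate entry relations
  have hadjf : f = b * g - a * h := by
    have := congrFun (congrFun hadj 2) 1
    rw [adjugate_fin_three] at this
    simp [ha', hb', hc', hd', he', hf', hg', hh', hp'] at this
    linarith
  have hadjh : h = c * d - a * f := by
    have := congrFun (congrFun hadj 1) 2
    rw [adjugate_fin_three] at this
    simp [ha', hb', hc', hd', he', hf', hg', hh', hp'] at this
    linarith
  have hadjc : c = d * h - e * g := by
    have := congrFun (congrFun hadj 2) 0
    rw [adjugate_fin_three] at this
    simp [ha', hb', hc', hd', he', hf', hg', hh', hp'] at this
    linarith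
  have hadjg : g = b * f - c * e := by
    have := congrFun (congrFun hadj 0) 2
    rw [adjugate_fin_three] at this
    simp [ha', hb', hc', hd', he', hf', hg', hh', hp'] at this
    linarith
  have hadjb : b = f * g - d * p := by
    have := congrFun (congrFun hadj 1) 0
    rw [adjugate_fin_three] at this
    simp [ha', hb', hc', hd', he', hf', hg', hh', hp'] at this
    linarith
  have hadjd : d = c * h - b * p := by
    have := congrFun (congrFun hadj 0) 1
    rw [adjugate_fin_three] at this
    simp [ha', hb', hc', hd', he', hf', hg', hh', hp'] at this
    linarith
  -- row norms from A * Aᵀ = 1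
  have hR1 : a ^ 2 + b ^ 2 + c ^ 2 = 1 := by
    have := congrFun (congrFun hAAt 0) 0
    simp [Matrix.mul_apply, Fin.sum_univ_three, Matrix.one_apply,
      ha', hb', hc'] at this
    linear_combination this
  have hR2 : d ^ 2 + e ^ 2 + f ^ 2 = 1 := by
    have := congrFun (congrFun hAAt 1) 1
    simp [Matrix.mul_apply, Fin.sum_univ_three, Matrix.one_apply,
      hd', he', hf'] at this
    linear_combination this
  have hR3 : g ^ 2 + h ^ 2 + p ^ 2 = 1 := by
    have := congrFun (congrFun hAAt 2) 2
    simp [Matrix.mul_apply, Fin.sum_univ_three, Matrix.one_apply,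
      hg', hh', hp'] at this
    linear_combination this
  -- column norms from Aᵀ * A = 1
  have hC1 : a ^ 2 + d ^ 2 + g ^ 2 = 1 := by
    have := congrFun (congrFun horth 0) 0
    simp [Matrix.mul_apply, Fin.sum_univ_three, Matrix.one_apply,
      ha', hd', hg'] at this
    linear_combination this
  have hC2 : b ^ 2 + e ^ 2 + h ^ 2 = 1 := by
    have := congrFun (congrFun horth 1) 1
    simp [Matrix.mul_apply, Fin.sum_univ_three, Matrix.one_apply,
      hb', he', hh'] at this
    linear_combination this
  have hC3 : c ^ 2 + f ^ 2 + p ^ 2 = 1 := by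
    have := congrFun (congrFun horth 2) 2
    simp [Matrix.mul_apply, Fin.sum_univ_three, Matrix.one_apply,
      hc', hf', hp'] at this
    linear_combination this
  rw [hf', hh'] at h1
  rw [hc', hg'] at h2
  rw [hb', hd'] at h3
  clear hAAt horth hadj hdet
  -- cleared-denominator equations for the three rows
  have hE0 : (a - 1) * ((c + g) * (b + d)) + b * ((f + h) * (b + d))
      + c * ((f + h) * (c + g)) = 0 := by
    by_cases hcase : a = -1
    · rw [hcase] at hR1 hC1
      have hc0' : c = 0 := (sum_sq_eq_zero_aux (by linear_combination hR1 : b ^ 2 + c ^ 2 = 0)).2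
      have hg0' : g = 0 := (sum_sq_eq_zero_aux (by linear_combination hC1 : d ^ 2 + g ^ 2 = 0)).2
      exact absurd (by rw [hc0', hg0']; ring : c + g = 0) h2
    · have hne : (1 + a) ≠ 0 := fun hx => hcase (by linarith)
      have key : (1 + a) * ((a - 1) * ((c + g) * (b + d)) + b * ((f + h) * (b + d))
          + c * ((f + h) * (c + g))) = 0 := by
        linear_combination ((c + g) * (b + d) - b * c) * hR1 + b * c * hC1
          + (b * (b + d) + c * (c + g)) * hadjf + (b * (b + d) + c * (c + g)) * hadjh
      rcases mul_eq_zero.mp key with hx | hx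
      · exact absurd hx hne
      · exact hx
  have hE1 : d * ((c + g) * (b + d)) + (e - 1) * ((f + h) * (b + d))
      + f * ((f + h) * (c + g)) = 0 := by
    by_cases hcase : e = -1
    · rw [hcase] at hR2 hC2
      have hd0' : d = 0 := (sum_sq_eq_zero_aux (by linear_combination hR2 : d ^ 2 + f ^ 2 = 0)).1
      have hb0' : b = 0 := (sum_sq_eq_zero_aux (by linear_combination hC2 : b ^ 2 + h ^ 2 = 0)).1
      exact absurd (by rw [hd0', hb0']; ring : b + d = 0) h3
    · have hne : (1 + e) ≠ 0 := fun hx => hcase (by linarith)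
      have key : (1 + e) * (d * ((c + g) * (b + d)) + (e - 1) * ((f + h) * (b + d))
          + f * ((f + h) * (c + g))) = 0 := by
        linear_combination ((f + h) * (b + d) - d * f) * hR2 + d * f * hC2
          + (d * (b + d) + f * (f + h)) * hadjc + (d * (b + d) + f * (f + h)) * hadjg
      rcases mul_eq_zero.mp key with hx | hx
      · exact absurd hx hne
      · exact hx
  have hE2 : g * ((c + g) * (b + d)) + h * ((f + h) * (b + d))
      + (p - 1) * ((f + h) * (c + g)) = 0 := by
    by_cases hcase : p = -1
    · rw [hcase] at hR3 hC3
      have hg0' : g = 0 := (sum_sq_eq_zero_aux (by linear_combination hR3 : g ^ 2 + h ^ 2 = 0)).1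
      have hc0' : c = 0 := (sum_sq_eq_zero_aux (by linear_combination hC3 : c ^ 2 + f ^ 2 = 0)).1
      exact absurd (by rw [hc0', hg0']; ring : c + g = 0) h2
    · have hne : (1 + p) ≠ 0 := fun hx => hcase (by linarith)
      have key : (1 + p) * (g * ((c + g) * (b + d)) + h * ((f + h) * (b + d))
          + (p - 1) * ((f + h) * (c + g))) = 0 := by
        linear_combination ((f + h) * (c + g) - g * h) * hR3 + g * h * hC3
          + (g * (c + g) + h * (f + h)) * hadjb + (g * (c + g) + h * (f + h)) * hadjd
      rcases mul_eq_zero.mp key with hx | hx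
      · exact absurd hx hne
      · exact hx
  funext i
  fin_cases i
  · show A.mulVec _ 0 = _
    simp only [Matrix.mulVec, dotProduct, Fin.sum_univ_three, Matrix.cons_val_zero,
      Matrix.cons_val_one, Matrix.head_cons, Matrix.cons_val_two, Matrix.tail_cons, Fin.reduceFinMk,
      ha', hb', hc', hd', he', hf', hg', hh', hp']
    field_simp
    linear_combination hE0
  · show A.mulVec _ 1 = _
    simp only [Matrix.mulVec, dotProduct, Fin.sum_univ_three, Matrix.cons_val_zero,
      Matrix.cons_val_one, Matrix.head_cons, Matrix.cons_val_two, Matrix.tail_cons, Fin.reduceFinMk,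
      ha', hb', hc', hd', he', hf', hg', hh', hp']
    field_simp
    linear_combination hE1
  · show A.mulVec _ 2 = _
    simp only [Matrix.mulVec, dotProduct, Fin.sum_univ_three, Matrix.cons_val_zero,
      Matrix.cons_val_one, Matrix.head_cons, Matrix.cons_val_two, Matrix.tail_cons, Fin.reduceFinMk,
      ha', hb', hc', hd', he', hf', hg', hh', hp']
    field_simp
    linear_combination hE2
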